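/- Let L be a finite meet-semilattice, G a building set of L, and α a maximal element of G. Then G̃ = (G \ {α}) ∪ {[α,0̂]} is a building set of the combinatorial blowup Bl_α L. -/

import Mathlib

attribute [local instance] Classical.propDecidable

universe u

/-- The set of maximal elements of `G` below `x`. -/
def maxBelow {L : Type u} [PartialOrder L] (G : Set L) (x : L) : Set L :=
  {g | g ∈ G ∧ g ≤ x ∧ ∀ h ∈ G, h ≤ x → g ≤ h → h = g}

/-- The tuple in the product of lower intervals which is `g` in the coordinate
indexed by `g` and bottom elsewhere. -/
noncomputable def deltaTuple {L : Type u} [PartialOrder L] [OrderBot L] (G : Set L) (x : L)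
    (g : maxBelow G x) : (h : maxBelow G x) → Set.Iic (h : L) :=
  fun h => if (h : L) = (g : L) then ⟨(h : L), le_refl _⟩ else ⟨⊥, bot_le⟩

/-- `G` is a (combinatorial) building set: `G` avoids the bottom element, and for every
`x ≠ ⊥` the interval `[⊥, x]` decomposes as the product of the intervals below the maximal
elements of `G` below `x`, via an isomorphism sending delta tuples to the corresponding
maximal elements. -/
def IsBuilding {L : Type u} [PartialOrder L] [OrderBot L] (G : Set L) : Prop :=
  (∀ g ∈ G, g ≠ ⊥) ∧
  ∀ x : L, x ≠ ⊥ →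
    ∃ φ : ((h : maxBelow G x) → Set.Iic (h : L)) ≃o Set.Iic x,
      ∀ g : maxBelow G x, ((φ (deltaTuple G x g) : Set.Iic x) : L) = (g : L)

/-- The combinatorial blowup of `L` at `α`: elements are either `y ∈ L` with `y ≱ α`
(encoded `(false, y)`), or symbols `[α, y]` for `y ≱ α` such that `y ∨ α` exists in `L`
(encoded `(true, y)`); the order is induced by the product order on `Bool × L`. -/
def Blowup (L : Type u) [PartialOrder L] (α : L) : Type u :=
  {p : Bool × L // ¬ α ≤ p.2 ∧ (p.1 = true → ∃ j : L, IsLUB {α, p.2} j)}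

noncomputable instance blowupPartialOrder {L : Type u} [PartialOrder L] (α : L) :
    PartialOrder (Blowup L α) :=
  inferInstanceAs (PartialOrder
    {p : Bool × L // ¬ α ≤ p.2 ∧ (p.1 = true → ∃ j : L, IsLUB {α, p.2} j)})

/-- The element of the blowup corresponding to `y ∈ L`, `y ≱ α`. -/
def Blowup.mk1 {L : Type u} [PartialOrder L] {α : L} (y : L) (hy : ¬ α ≤ y) : Blowup L α :=
  ⟨(false, y), hy, fun hb => Bool.noConfusion hb⟩

/-- The element `[α, y]` of the blowup, for `y ≱ α` such that `y ∨ α` exists. -/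
def Blowup.mk2 {L : Type u} [PartialOrder L] {α : L} (y : L) (hy : ¬ α ≤ y)
    (hj : ∃ j : L, IsLUB {α, y} j) : Blowup L α :=
  ⟨(true, y), hy, fun _ => hj⟩

/-- The blowup of a semilattice with `α ≠ ⊥` has a bottom element, the copy of `⊥`. -/
def blowupOrderBot {L : Type u} [PartialOrder L] [OrderBot L] {α : L} (hα : α ≠ ⊥) :
    OrderBot (Blowup L α) where
  bot := Blowup.mk1 ⊥ (fun h => hα (le_bot_iff.mp h))
  bot_le := fun w => by
    show ((false, (⊥ : L)) : Bool × L) ≤ w.val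
    exact ⟨Bool.false_le _, bot_le⟩


/-- Reindexing/componentwise order iso for pi types. -/
def piOrderIso {ι ι' : Type*} {A : ι → Type*} {B : ι' → Type*} [∀ i, Preorder (A i)]
    [∀ j, Preorder (B j)] (e : ι ≃ ι') (F : ∀ i, A i ≃o B (e i)) :
    ((i : ι) → A i) ≃o ((j : ι') → B j) where
  toEquiv := e.piCongr fun i => (F i).toEquiv
  map_rel_iff' := by
    intro f g
    constructor
    · intro h i
      have h2 := h (e i)
      rw [Equiv.piCongr_apply_apply, Equiv.piCongr_apply_apply] at h2
      exact (F i).le_iff_le.mp h2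
    · intro h j
      rcases e.surjective j with ⟨i, rfl⟩
      rw [Equiv.piCongr_apply_apply, Equiv.piCongr_apply_apply]
      exact (F i).le_iff_le.mpr (h i)

lemma piOrderIso_symm_apply {ι ι' : Type*} {A : ι → Type*} {B : ι' → Type*}
    [∀ i, Preorder (A i)] [∀ j, Preorder (B j)] (e : ι ≃ ι') (F : ∀ i, A i ≃o B (e i))
    (f : (j : ι') → B j) (i : ι) :
    (piOrderIso e F).symm f i = (F i).symm (f (e i)) :=
  congrFun (Equiv.piCongr_symm_apply e (fun i => (F i).toEquiv) f) i

/-- Splitting an option-indexed product. -/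
def optionPiOrderIso {ι : Type*} {A : Option ι → Type*} [∀ o, Preorder (A o)] :
    ((o : Option ι) → A o) ≃o A none × ((i : ι) → A (some i)) where
  toFun f := (f none, fun i => f (some i))
  invFun p o := Option.rec p.1 p.2 o
  left_inv f := funext fun o => by cases o <;> rfl
  right_inv p := rfl
  map_rel_iff' := by
    intro f g
    constructor
    · rintro ⟨h1, h2⟩ o
      cases o with
      | none => exact h1
      | some i => exact h2 i
    · intro h
      exact ⟨h none, fun i => h (some i)⟩

/-- product of two order isos -/
def prodOrderIsoCongr {A B C D : Type*} [Preorder A] [Preorder B] [Preorder C] [Preorder D]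
    (f : A ≃o B) (g : C ≃o D) : A × C ≃o B × D where
  toEquiv := f.toEquiv.prodCongr g.toEquiv
  map_rel_iff' := by
    intro p q
    constructor
    · rintro ⟨h1, h2⟩
      exact ⟨f.le_iff_le.mp h1, g.le_iff_le.mp h2⟩
    · rintro ⟨h1, h2⟩
      exact ⟨f.le_iff_le.mpr h1, g.le_iff_le.mpr h2⟩

lemma optionPiOrderIso_apply {ι : Type*} {A : Option ι → Type*} [∀ o, Preorder (A o)]
    (f : (o : Option ι) → A o) :
    optionPiOrderIso f = (f none, fun i => f (some i)) := rfl

lemma prodOrderIsoCongr_apply {A B C D : Type*} [Preorder A] [Preorder B] [Preorder C]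
    [Preorder D] (f : A ≃o B) (g : C ≃o D) (p : A × C) :
    prodOrderIsoCongr f g p = (f p.1, g p.2) := rfl
section BlowupHelpers

variable {L : Type u} [SemilatticeInf L] [Fintype L] [OrderBot L] {α : L}

lemma blowup_le_iff {w1 w2 : Blowup L α} :
    w1 ≤ w2 ↔ w1.val.1 ≤ w2.val.1 ∧ w1.val.2 ≤ w2.val.2 := Iff.rfl

lemma exists_isLUB_pair (a b u : L) (ha : a ≤ u) (hb : b ≤ u) : ∃ j, IsLUB {a, b} j := by
  classical
  set U : Finset L := Finset.univ.filter (fun v => a ≤ v ∧ b ≤ v) with hU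
  have hu : u ∈ U := by simp [hU, ha, hb]
  have hne : U.Nonempty := ⟨u, hu⟩
  refine ⟨U.inf' hne id, ?_, ?_⟩
  · rintro z hz
    rcases hz with rfl | hz
    · exact Finset.le_inf' hne id fun v hv => (Finset.mem_filter.mp hv).2.1
    · rw [Set.mem_singleton_iff] at hz
      subst hz
      exact Finset.le_inf' hne id fun v hv => (Finset.mem_filter.mp hv).2.2
  · intro v hv
    have hvU : v ∈ U := by
      simp only [hU, Finset.mem_filter, Finset.mem_univ, true_and]
      exact ⟨hv (Set.mem_insert _ _), hv (Set.mem_insert_iff.mpr (Or.inr rfl))⟩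
    exact Finset.inf'_le id hvU

lemma isLUB_pair_bot : IsLUB {α, (⊥ : L)} α := by
  constructor
  · rintro z hz
    rcases hz with rfl | hz
    · exact le_rfl
    · rw [Set.mem_singleton_iff] at hz
      subst hz
      exact bot_le
  · intro v hv
    exact hv (Set.mem_insert _ _)

/-- The copy of `Iic y` inside the blowup. -/
noncomputable def blowIic1 (y : L) (hy : ¬ α ≤ y) :
    Set.Iic y ≃o Set.Iic (Blowup.mk1 (α := α) y hy) where
  toFun z := ⟨Blowup.mk1 z.1 (fun h => hy (h.trans z.2)),
    show ((false, z.1) : Bool × L) ≤ (false, y) from ⟨le_rfl, z.2⟩⟩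
  invFun w := ⟨w.1.1.2, (blowup_le_iff.mp w.2).2⟩
  left_inv z := rfl
  right_inv w := by
    have h1 : w.1.1.1 = false := le_bot_iff.mp (blowup_le_iff.mp w.2).1
    exact Subtype.ext (Subtype.ext (Prod.ext h1.symm rfl))
  map_rel_iff' := by
    intro z1 z2
    constructor
    · intro h
      exact (blowup_le_iff.mp h).2
    · intro h
      exact blowup_le_iff.mpr ⟨le_rfl, h⟩

/-- The interval below `[α, x]` in the blowup, as a product. -/
noncomputable def blowIic2 (hα : α ≠ ⊥) (x : L) (hx : ¬ α ≤ x) (hj : ∃ j, IsLUB {α, x} j) :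
    Set.Iic (Blowup.mk2 (α := α) ⊥ (fun h => hα (le_bot_iff.mp h)) ⟨α, isLUB_pair_bot⟩) ×
      Set.Iic x ≃o Set.Iic (Blowup.mk2 x hx hj) where
  toFun p := ⟨⟨(p.1.1.1.1, p.2.1), fun h => hx (h.trans p.2.2), fun _ => by
      obtain ⟨j, hjj⟩ := hj
      exact exists_isLUB_pair α p.2.1 j (hjj.1 (Set.mem_insert _ _))
        (le_trans p.2.2 (hjj.1 (Set.mem_insert_iff.mpr (Or.inr rfl))))⟩,
    show ((p.1.1.1.1, p.2.1) : Bool × L) ≤ (true, x) from ⟨Bool.le_true _, p.2.2⟩⟩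
  invFun w := (⟨⟨(w.1.1.1, ⊥), fun h => hα (le_bot_iff.mp h), fun _ => ⟨α, isLUB_pair_bot⟩⟩,
      show ((w.1.1.1, (⊥ : L)) : Bool × L) ≤ (true, ⊥) from
        ⟨(blowup_le_iff.mp w.2).1, le_rfl⟩⟩,
    ⟨w.1.1.2, (blowup_le_iff.mp w.2).2⟩)
  left_inv p := by
    refine Prod.ext ?_ ?_
    · exact Subtype.ext (Subtype.ext (Prod.ext rfl
        (le_bot_iff.mp (blowup_le_iff.mp p.1.2).2).symm))
    · rfl
  right_inv w := Subtype.ext (Subtype.ext rfl)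
  map_rel_iff' := by
    intro p q
    constructor
    · rintro ⟨h1, h2⟩
      refine ⟨blowup_le_iff.mpr ⟨h1, le_trans (blowup_le_iff.mp p.1.2).2 bot_le⟩, h2⟩
    · rintro ⟨h1, h2⟩
      exact ⟨(blowup_le_iff.mp h1).1, h2⟩

end BlowupHelpers
section MaxHelpers

set_option linter.unusedSectionVars false

variable {L : Type u} [SemilatticeInf L] [Fintype L] [OrderBot L] {α : L}

/-- The modified building set in the blowup. -/
def tildeG (G : Set L) (α : L) : Set (Blowup L α) :=
  {w : Blowup L α | (w.val.1 = false ∧ w.val.2 ∈ G ∧ w.val.2 ≠ α) ∨ w.val = (true, (⊥ : L))}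

variable {G : Set L}

lemma bool_le_false {b : Bool} (h : b ≤ false) : b = false := le_bot_iff.mp h

/-- maximal elements below a non-[α,-] element of the blowup -/
noncomputable def maxEquiv1 (x : L) (hx : ¬ α ≤ x) :
    maxBelow G x ≃ maxBelow (tildeG G α) (Blowup.mk1 x hx) where
  toFun g := ⟨Blowup.mk1 g.1 (fun h => hx (h.trans g.2.2.1)), by
    refine ⟨Or.inl ⟨rfl, g.2.1, fun he => hx (he ▸ g.2.2.1)⟩,
      blowup_le_iff.mpr ⟨le_rfl, g.2.2.1⟩, ?_⟩
    intro h hh hhx hgh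
    have h1 : h.1.1 = false := bool_le_false (blowup_le_iff.mp hhx).1
    rcases hh with ⟨_, hhG, _⟩ | habs
    · have h2 : h.1.2 = g.1 :=
        g.2.2.2 h.1.2 hhG (blowup_le_iff.mp hhx).2 (blowup_le_iff.mp hgh).2
      exact Subtype.ext (Prod.ext h1 h2)
    · rw [habs] at h1
      simp at h1⟩
  invFun h := ⟨h.1.1.2, by
    have h1 : h.1.1.1 = false := bool_le_false (blowup_le_iff.mp h.2.2.1).1
    rcases h.2.1 with ⟨_, hhG, _⟩ | habs
    · refine ⟨hhG, (blowup_le_iff.mp h.2.2.1).2, ?_⟩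
      intro k hk hkx hge
      have hkα : ¬ α ≤ k := fun hc => hx (hc.trans hkx)
      have hmem : Blowup.mk1 k hkα ∈ tildeG G α :=
        Or.inl ⟨rfl, hk, fun he => hx (he ▸ hkx)⟩
      have hle : Blowup.mk1 k hkα ≤ Blowup.mk1 x hx := blowup_le_iff.mpr ⟨le_rfl, hkx⟩
      have hge' : h.1 ≤ Blowup.mk1 k hkα := blowup_le_iff.mpr ⟨h1 ▸ le_rfl, hge⟩
      have := h.2.2.2 (Blowup.mk1 k hkα) hmem hle hge'
      exact congrArg (fun w => w.1.2) this
    · rw [habs] at h1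
      simp at h1⟩
  left_inv g := Subtype.ext rfl
  right_inv h := by
    have h1 : h.1.1.1 = false := bool_le_false (blowup_le_iff.mp h.2.2.1).1
    exact Subtype.ext (Subtype.ext (Prod.ext h1.symm rfl))

/-- maximal elements below an element `[α, x]` of the blowup -/
noncomputable def maxEquiv2 (hbot : ∀ g ∈ G, g ≠ ⊥) (hα : α ≠ ⊥) (x : L) (hx : ¬ α ≤ x)
    (hj : ∃ j : L, IsLUB {α, x} j) :
    Option (maxBelow G x) ≃ maxBelow (tildeG G α) (Blowup.mk2 x hx hj) where
  toFun o :=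
    match o with
    | none => ⟨Blowup.mk2 ⊥ (fun h => hα (le_bot_iff.mp h)) ⟨α, isLUB_pair_bot⟩, by
        refine ⟨Or.inr rfl, blowup_le_iff.mpr ⟨le_rfl, bot_le⟩, ?_⟩
        intro h hh hhx hgh
        have h1 : h.1.1 = true := le_antisymm (Bool.le_true _) (blowup_le_iff.mp hgh).1
        rcases hh with ⟨hf, _, _⟩ | habs
        · rw [h1] at hf
          simp at hf
        · exact Subtype.ext habs⟩
    | some g => ⟨Blowup.mk1 g.1 (fun h => hx (h.trans g.2.2.1)), by
        refine ⟨Or.inl ⟨rfl, g.2.1, fun he => hx (he ▸ g.2.2.1)⟩,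
          blowup_le_iff.mpr ⟨Bool.false_le _, g.2.2.1⟩, ?_⟩
        intro h hh hhx hgh
        rcases hh with ⟨hf, hhG, _⟩ | habs
        · have h2 : h.1.2 = g.1 :=
            g.2.2.2 h.1.2 hhG (blowup_le_iff.mp hhx).2 (blowup_le_iff.mp hgh).2
          exact Subtype.ext (Prod.ext hf h2)
        · have hb : h.1.2 = ⊥ := congrArg Prod.snd habs
          have hgb : g.1 ≤ ⊥ := hb ▸ (blowup_le_iff.mp hgh).2
          exact absurd (le_bot_iff.mp hgb) (hbot g.1 g.2.1)⟩
  invFun h :=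
    if hb : h.1.1.1 = true then none
    else some ⟨h.1.1.2, by
      have hf : h.1.1.1 = false := by
        cases hB : h.1.1.1
        · rfl
        · exact absurd hB hb
      rcases h.2.1 with ⟨_, hhG, _⟩ | habs
      · refine ⟨hhG, (blowup_le_iff.mp h.2.2.1).2, ?_⟩
        intro k hk hkx hge
        have hkα : ¬ α ≤ k := fun hc => hx (hc.trans hkx)
        have hmem : Blowup.mk1 k hkα ∈ tildeG G α :=
          Or.inl ⟨rfl, hk, fun he => hx (he ▸ hkx)⟩
        have hle : Blowup.mk1 k hkα ≤ Blowup.mk2 x hx hj :=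
          blowup_le_iff.mpr ⟨Bool.false_le _, hkx⟩
        have hge' : h.1 ≤ Blowup.mk1 k hkα := blowup_le_iff.mpr ⟨hf ▸ le_rfl, hge⟩
        have := h.2.2.2 (Blowup.mk1 k hkα) hmem hle hge'
        exact congrArg (fun w => w.1.2) this
      · have : h.1.1.1 = true := congrArg Prod.fst habs
        exact absurd this hb⟩
  left_inv o := by
    cases o with
    | none => rfl
    | some g => rfl
  right_inv h := by
    dsimp only
    rcases h.2.1 with ⟨hf, _, _⟩ | habs
    · have hb : ¬ (h.1.1.1 = true) := by
        rw [hf]; simp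
      rw [dif_neg hb]
      exact Subtype.ext (Subtype.ext (Prod.ext hf.symm rfl))
    · have hb : h.1.1.1 = true := congrArg Prod.fst habs
      rw [dif_pos hb]
      exact Subtype.ext (Subtype.ext habs.symm)

end MaxHelpers
section Main

set_option linter.unusedSectionVars false
set_option maxHeartbeats 1000000

variable {L : Type u} [SemilatticeInf L] [Fintype L] [OrderBot L] {α : L} {G : Set L}

lemma piOrderIso_refl_apply {ι : Type*} {A B : ι → Type*} [∀ i, Preorder (A i)]
    [∀ i, Preorder (B i)] (F : ∀ i, A i ≃o B i) (f : (i : ι) → A i) (i : ι) :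
    piOrderIso (Equiv.refl ι) F f i = F i (f i) :=
  Equiv.piCongr_apply_apply (Equiv.refl ι) (fun i => (F i).toEquiv) f i

lemma phi_all (hbot : ∀ g ∈ G, g ≠ ⊥)
    (hiso : ∀ x : L, x ≠ ⊥ → ∃ φ : ((h : maxBelow G x) → Set.Iic (h : L)) ≃o Set.Iic x,
      ∀ g : maxBelow G x, ((φ (deltaTuple G x g) : Set.Iic x) : L) = (g : L)) (x : L) :
    ∃ φ : ((h : maxBelow G x) → Set.Iic (h : L)) ≃o Set.Iic x,
      ∀ g : maxBelow G x, ((φ (deltaTuple G x g) : Set.Iic x) : L) = (g : L) := by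
  by_cases hx : x = ⊥
  · subst hx
    haveI hE : IsEmpty (maxBelow G (⊥ : L)) :=
      ⟨fun g => hbot g.1 g.2.1 (le_bot_iff.mp g.2.2.1)⟩
    refine ⟨⟨⟨fun _ => ⟨⊥, le_rfl⟩, fun _ => fun h => isEmptyElim h,
      fun f => funext fun h => isEmptyElim h,
      fun z => Subtype.ext (le_bot_iff.mp z.2).symm⟩, ?_⟩, fun g => isEmptyElim g⟩
    intro f g
    constructor
    · intro _ h
      exact isEmptyElim h
    · intro _
      exact le_rfl
  · exact hiso x hx

theorem building_of_blowup' {L : Type u} [SemilatticeInf L] [Fintype L] [OrderBot L]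
    (G : Set L) (hG : IsBuilding G) (α : L) (hαG : α ∈ G)
    (hαmax : ∀ g ∈ G, α ≤ g → g = α) :
    @IsBuilding (Blowup L α) (blowupPartialOrder α) (blowupOrderBot (hG.1 α hαG))
      {w : Blowup L α |
        (w.val.1 = false ∧ w.val.2 ∈ G ∧ w.val.2 ≠ α) ∨ w.val = (true, (⊥ : L))} := by
  letI instB : OrderBot (Blowup L α) := blowupOrderBot (hG.1 α hαG)
  show IsBuilding (tildeG G α)
  constructor
  · intro wg hwg heq
    rcases hwg with ⟨hf, hGmem, _⟩ | habs
    · have h2 : wg.1.2 = ⊥ := congrArg (fun w => w.1.2) heq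
      exact hG.1 _ hGmem h2
    · have h2 : wg.1.1 = false := congrArg (fun w => w.1.1) heq
      rw [habs] at h2
      simp at h2
  · intro w hw
    obtain ⟨⟨b, x⟩, hx, hlubp⟩ := w
    cases b with
    | false =>
      have hxbot : x ≠ ⊥ := by
        intro h
        subst h
        exact hw (Subtype.ext rfl)
      obtain ⟨φ, hφ⟩ := hG.2 x hxbot
      rw [show (⟨(false, x), hx, hlubp⟩ : Blowup L α) = Blowup.mk1 x hx from rfl]
      refine ⟨((piOrderIso (maxEquiv1 (G := G) x hx)
          (fun g => blowIic1 g.1 (fun h => hx (h.trans g.2.2.1)))).symm.trans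
        (φ.trans (blowIic1 x hx))), ?_⟩
      intro h
      rcases (maxEquiv1 (G := G) x hx).surjective h with ⟨g0, rfl⟩
      have key : (piOrderIso (maxEquiv1 (G := G) x hx)
            (fun g => blowIic1 g.1 (fun h => hx (h.trans g.2.2.1)))).symm
            (deltaTuple (tildeG G α) (Blowup.mk1 x hx) ((maxEquiv1 (G := G) x hx) g0))
          = deltaTuple G x g0 := by
        funext g
        erw [piOrderIso_symm_apply]
        by_cases hgg : (g : L) = (g0 : L)
        · have hcond : ((maxEquiv1 (G := G) x hx) g : Blowup L α)
              = ((maxEquiv1 (G := G) x hx) g0 : Blowup L α) :=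
            Subtype.ext (Prod.ext rfl hgg)
          simp only [deltaTuple]
          rw [if_pos hcond, if_pos hgg]
          exact Subtype.ext rfl
        · have hcond : ¬ (((maxEquiv1 (G := G) x hx) g : Blowup L α)
              = ((maxEquiv1 (G := G) x hx) g0 : Blowup L α)) := by
            intro hc
            exact hgg (congrArg (fun w => w.1.2) hc)
          simp only [deltaTuple]
          rw [if_neg hcond, if_neg hgg]
          exact Subtype.ext rfl
      simp only [OrderIso.trans_apply]
      rw [key]
      apply Subtype.ext
      show ((false, (φ (deltaTuple G x g0) : L)) : Bool × L)
          = ((maxEquiv1 (G := G) x hx) g0 : Blowup L α).1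
      rw [hφ g0]
      rfl
    | true =>
      have hj : ∃ j : L, IsLUB {α, x} j := hlubp rfl
      have hα : α ≠ ⊥ := hG.1 α hαG
      obtain ⟨φ, hφ⟩ := phi_all hG.1 hG.2 x
      rw [show (⟨(true, x), hx, hlubp⟩ : Blowup L α) = Blowup.mk2 x hx hj from rfl]
      refine ⟨(piOrderIso (maxEquiv2 (G := G) hG.1 hα x hx hj)
          (fun o => OrderIso.refl _)).symm.trans
        (optionPiOrderIso.trans
          ((prodOrderIsoCongr (OrderIso.refl _)
            ((piOrderIso (Equiv.refl _)
              (fun g => (blowIic1 g.1 (fun hle => hx (hle.trans g.2.2.1))).symm)).trans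
              φ)).trans
            (blowIic2 hα x hx hj))), ?_⟩
      intro h
      rcases (maxEquiv2 (G := G) hG.1 hα x hx hj).surjective h with ⟨o, rfl⟩
      have hd : (piOrderIso (maxEquiv2 (G := G) hG.1 hα x hx hj)
            (fun o => OrderIso.refl _)).symm
            (deltaTuple (tildeG G α) (Blowup.mk2 x hx hj)
              ((maxEquiv2 (G := G) hG.1 hα x hx hj) o))
          = fun o' => deltaTuple (tildeG G α) (Blowup.mk2 x hx hj)
              ((maxEquiv2 (G := G) hG.1 hα x hx hj) o)
              ((maxEquiv2 (G := G) hG.1 hα x hx hj) o') := by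
        funext o'
        rw [piOrderIso_symm_apply]
        rfl
      simp only [OrderIso.trans_apply]
      rw [hd, optionPiOrderIso_apply]
      erw [OrderIso.trans_apply, prodOrderIsoCongr_apply]
      cases o with
      | none =>
        dsimp only
        erw [OrderIso.refl_apply, OrderIso.trans_apply]
        have h1 : deltaTuple (tildeG G α) (Blowup.mk2 x hx hj)
            ((maxEquiv2 (G := G) hG.1 hα x hx hj) none)
            ((maxEquiv2 (G := G) hG.1 hα x hx hj) none)
            = ⟨((maxEquiv2 (G := G) hG.1 hα x hx hj) none : Blowup L α), Set.self_mem_Iic⟩ := by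
          simp only [deltaTuple]
          rw [if_pos trivial]
        have h2 : (piOrderIso (Equiv.refl _)
            (fun g => (blowIic1 g.1 (fun hle => hx (hle.trans g.2.2.1))).symm))
            (fun i => deltaTuple (tildeG G α) (Blowup.mk2 x hx hj)
              ((maxEquiv2 (G := G) hG.1 hα x hx hj) none)
              ((maxEquiv2 (G := G) hG.1 hα x hx hj) (some i)))
            = (⊥ : (g : maxBelow G x) → Set.Iic (g : L)) := by
          funext g
          erw [piOrderIso_refl_apply]
          have hcond : ¬ (((maxEquiv2 (G := G) hG.1 hα x hx hj) (some g) : Blowup L α)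
              = ((maxEquiv2 (G := G) hG.1 hα x hx hj) none : Blowup L α)) := by
            intro hc
            exact Bool.noConfusion
              (show false = true from congrArg (fun w : Blowup L α => w.1.1) hc)
          have h3 : deltaTuple (tildeG G α) (Blowup.mk2 x hx hj)
              ((maxEquiv2 (G := G) hG.1 hα x hx hj) none)
              ((maxEquiv2 (G := G) hG.1 hα x hx hj) (some g)) = ⟨⊥, Set.mem_Iic.mpr bot_le⟩ := by
            simp only [deltaTuple]
            rw [if_neg hcond]
          rw [h3]
          exact Subtype.ext rfl
        erw [h1, h2, φ.map_bot]
        rfl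
      | some g0 =>
        dsimp only
        erw [OrderIso.refl_apply, OrderIso.trans_apply]
        have h1cond : ¬ (((maxEquiv2 (G := G) hG.1 hα x hx hj) none : Blowup L α)
            = ((maxEquiv2 (G := G) hG.1 hα x hx hj) (some g0) : Blowup L α)) := by
          intro hc
          exact Bool.noConfusion
            (show true = false from congrArg (fun w : Blowup L α => w.1.1) hc)
        have h1 : deltaTuple (tildeG G α) (Blowup.mk2 x hx hj)
            ((maxEquiv2 (G := G) hG.1 hα x hx hj) (some g0))
            ((maxEquiv2 (G := G) hG.1 hα x hx hj) none) = ⟨⊥, Set.mem_Iic.mpr bot_le⟩ := by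
          simp only [deltaTuple]
          rw [if_neg h1cond]
        have h2 : (piOrderIso (Equiv.refl _)
            (fun g => (blowIic1 g.1 (fun hle => hx (hle.trans g.2.2.1))).symm))
            (fun i => deltaTuple (tildeG G α) (Blowup.mk2 x hx hj)
              ((maxEquiv2 (G := G) hG.1 hα x hx hj) (some g0))
              ((maxEquiv2 (G := G) hG.1 hα x hx hj) (some i)))
            = deltaTuple G x g0 := by
          funext g
          erw [piOrderIso_refl_apply]
          by_cases hgg : (g : L) = (g0 : L)
          · have hcond : (((maxEquiv2 (G := G) hG.1 hα x hx hj) (some g) : Blowup L α)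
                = ((maxEquiv2 (G := G) hG.1 hα x hx hj) (some g0) : Blowup L α)) :=
              Subtype.ext (Prod.ext rfl hgg)
            simp only [deltaTuple]
            rw [if_pos hcond, if_pos hgg]
            exact Subtype.ext rfl
          · have hcond : ¬ (((maxEquiv2 (G := G) hG.1 hα x hx hj) (some g) : Blowup L α)
                = ((maxEquiv2 (G := G) hG.1 hα x hx hj) (some g0) : Blowup L α)) := by
              intro hc
              exact hgg (congrArg (fun w => w.1.2) hc)
            simp only [deltaTuple]
            rw [if_neg hcond, if_neg hgg]
            exact Subtype.ext rfl
        erw [h1, h2]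
        apply Subtype.ext
        exact Prod.ext rfl (hφ g0)

end Main

/-- blowing up a maximal element `α` of a building set `G` yields, after
replacing `α` by `[α, ⊥]`, a building set of the combinatorial blowup. -/
theorem building_of_blowup {L : Type u} [SemilatticeInf L] [Fintype L] [OrderBot L]
    (G : Set L) (hG : IsBuilding G) (α : L) (hαG : α ∈ G)
    (hαmax : ∀ g ∈ G, α ≤ g → g = α) :
    @IsBuilding (Blowup L α) (blowupPartialOrder α) (blowupOrderBot (hG.1 α hαG))
      {w : Blowup L α |
        (w.val.1 = false ∧ w.val.2 ∈ G ∧ w.val.2 ≠ α) ∨ w.val = (true, (⊥ : L))} := building_of_blowup' G hG α hαG hαmax
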